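/- Let G and H be groups with finite symmetric generating sets X and Y respectively, and let φ : G → H be a surjective homomorphism with φ(X) = Y. Then the Følner constant satisfies Føl(H,Y) ≤ Føl(G,X), where Føl(G,X) = inf over finite nonempty subsets A ⊆ G of |∂_X A|/|A| and ∂_X A = {a ∈ A : ax ∉ A for some x ∈ X ∪ X⁻¹}. -/

import Mathlib

open scoped Classical

/-- The boundary `∂_X A` of a finite set `A` with respect to a finite generating
set `X`: elements `a ∈ A` with `a x ∉ A` for some `x ∈ X^{±1}`. -/
noncomputable def folBoundary {G : Type*} [Group G] (X : Finset G) (A : Finset G) : Finset G :=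
  A.filter (fun a => ∃ x ∈ X ∪ X.image (·⁻¹), a * x ∉ A)

/-- The Følner constant of `G` with respect to a finite generating set `X`. -/
noncomputable def folConst {G : Type*} [Group G] (X : Finset G) : ℝ :=
  ⨅ A : {A : Finset G // A.Nonempty}, ((folBoundary X A.1).card : ℝ) / (A.1.card : ℝ)

private lemma folKey {G H : Type*} [Group G] [Group H]
    (φ : G →* H) (X : Finset G) (A : Finset G) (hA : A.Nonempty) (hX : X.Nonempty) :
    ∃ B : Finset H, B.Nonempty ∧
      (folBoundary (X.image φ) B).card * A.card ≤ (folBoundary X A).card * B.card := by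
  classical
  set Y : Finset H := (X.image φ) ∪ (X.image φ).image (·⁻¹) with hYdef
  have hY : Y.Nonempty := Finset.Nonempty.inl (hX.image φ)
  have hYim : Y = (X ∪ X.image (·⁻¹)).image φ := by
    rw [hYdef, Finset.image_union, Finset.image_image, Finset.image_image]
    congr 1
    ext h
    simp only [Finset.mem_image, Function.comp_apply]
    constructor
    · rintro ⟨x, hx, rfl⟩; exact ⟨x, hx, map_inv φ x⟩
    · rintro ⟨x, hx, rfl⟩; exact ⟨x, hx, (map_inv φ x).symm⟩
  set f : H → ℕ := fun h => (A.filter (fun a => φ a = h)).card with hf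
  set I : Finset H := A.image φ with hIdef
  have hI : I.Nonempty := hA.image φ
  set N : ℕ := I.sup' hI f with hN
  have hfI : ∀ {h}, h ∈ I → 1 ≤ f h := by
    intro h hh
    obtain ⟨a, ha, rfl⟩ := Finset.mem_image.1 hh
    exact Finset.card_pos.2 ⟨a, Finset.mem_filter.2 ⟨ha, rfl⟩⟩
  have hIf : ∀ {h}, 1 ≤ f h → h ∈ I := by
    intro h hh
    obtain ⟨a, ha⟩ := Finset.card_pos.1 hh
    rw [Finset.mem_filter] at ha
    exact Finset.mem_image.2 ⟨a, ha.1, ha.2⟩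
  have hfN : ∀ {h}, h ∈ I → f h ≤ N := fun hh => Finset.le_sup' f hh
  have hfN' : ∀ h, f h ≤ N := by
    intro h
    by_cases hh : h ∈ I
    · exact hfN hh
    · have : f h = 0 := by
        by_contra hc
        exact hh (hIf (Nat.one_le_iff_ne_zero.2 hc))
      omega
  set B : ℕ → Finset H := fun n => I.filter (fun h => n ≤ f h) with hB
  have hmemB : ∀ {n h}, 1 ≤ n → (h ∈ B n ↔ n ≤ f h) := by
    intro n h hn
    simp only [hB, Finset.mem_filter]
    exact ⟨And.right, fun hle => ⟨hIf (le_trans hn hle), hle⟩⟩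
  set m : H → ℕ := fun h => Y.inf' hY (fun y => f (h * y)) with hm
  have hbd : ∀ n, 1 ≤ n →
      folBoundary (X.image φ) (B n) = I.filter (fun h => (n ≤ f h ∧ m h < n)) := by
    intro n hn
    have hnot : ∀ h' : H, h' ∉ B n ↔ f h' < n := by
      intro h'
      constructor
      · intro hmem
        by_contra hc
        exact hmem ((hmemB hn).2 (not_lt.1 hc))
      · intro hlt hmem
        exact absurd ((hmemB hn).1 hmem) (not_le.2 hlt)
    ext h
    constructor
    · intro hmem
      obtain ⟨h1, y, hy, hyB⟩ := Finset.mem_filter.1 hmem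
      have h1' := (hmemB hn).1 h1
      refine Finset.mem_filter.2 ⟨hIf (le_trans hn h1'), h1', ?_⟩
      exact lt_of_le_of_lt (Finset.inf'_le _ hy) ((hnot _).1 hyB)
    · intro hmem
      obtain ⟨hhI, h1, h2⟩ := Finset.mem_filter.1 hmem
      obtain ⟨y, hy, hlt⟩ := Finset.exists_mem_eq_inf' hY (fun y => f (h * y))
      refine Finset.mem_filter.2 ⟨(hmemB hn).2 h1, y, hy, (hnot _).2 ?_⟩
      have hmeq : m h = f (h * y) := hlt
      omega
  -- sum of cards of level sets
  have hsum1 : ∑ n ∈ Finset.Icc 1 N, (B n).card = A.card := by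
    have hA' : A.card = ∑ h ∈ I, f h :=
      Finset.card_eq_sum_card_fiberwise (fun a ha => Finset.mem_image_of_mem φ ha)
    rw [hA']
    have : ∀ n, (B n).card = ∑ h ∈ I, if n ≤ f h then 1 else 0 := fun n =>
      Finset.card_filter _ _
    simp_rw [this]
    rw [Finset.sum_comm]
    refine Finset.sum_congr rfl (fun h hh => ?_)
    rw [← Finset.card_filter]
    have heq : Finset.filter (fun n => n ≤ f h) (Finset.Icc 1 N) = Finset.Icc 1 (f h) := by
      ext n
      simp only [Finset.mem_filter, Finset.mem_Icc]
      have := hfN hh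
      omega
    rw [heq, Nat.card_Icc]
    omega
  -- sum of boundary cards is at most the boundary of A
  have hsum2 : ∑ n ∈ Finset.Icc 1 N, (folBoundary (X.image φ) (B n)).card
      ≤ (folBoundary X A).card := by
    have hDf : (folBoundary X A).card
        = ∑ h ∈ I, ((folBoundary X A).filter (fun a => φ a = h)).card := by
      refine Finset.card_eq_sum_card_fiberwise (fun a ha => ?_)
      exact Finset.mem_image_of_mem φ (Finset.mem_of_mem_filter a ha)
    rw [hDf]
    have hstep : ∀ n ∈ Finset.Icc 1 N, (folBoundary (X.image φ) (B n)).card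
        = ∑ h ∈ I, if n ≤ f h ∧ m h < n then 1 else 0 := by
      intro n hn
      rw [Finset.mem_Icc] at hn
      rw [hbd n hn.1]
      exact Finset.card_filter _ _
    rw [Finset.sum_congr rfl hstep, Finset.sum_comm]
    refine Finset.sum_le_sum (fun h hh => ?_)
    have hcount : ∑ n ∈ Finset.Icc 1 N, (if n ≤ f h ∧ m h < n then 1 else 0) = f h - m h := by
      rw [← Finset.card_filter]
      have heq : Finset.filter (fun n => n ≤ f h ∧ m h < n) (Finset.Icc 1 N)
          = Finset.Ioc (m h) (f h) := by
        ext n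
        simp only [Finset.mem_filter, Finset.mem_Icc, Finset.mem_Ioc]
        have := hfN hh
        omega
      rw [heq, Nat.card_Ioc]
    rw [hcount]
    -- per fiber estimate
    obtain ⟨y₀, hy₀Y, hy₀⟩ := Finset.exists_mem_eq_inf' hY (fun y => f (h * y))
    rw [hYim] at hy₀Y
    obtain ⟨x, hx, rfl⟩ := Finset.mem_image.1 hy₀Y
    set S : Finset G := A.filter (fun a => φ a = h) with hS
    have hsplit : (S.filter (fun a => a * x ∈ A)).card
        + (S.filter (fun a => ¬ a * x ∈ A)).card = S.card :=
      Finset.card_filter_add_card_filter_not _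
    have h1 : (S.filter (fun a => a * x ∈ A)).card ≤ f (h * φ x) := by
      refine Finset.card_le_card_of_injOn (fun a => a * x) (fun a ha => ?_) ?_
      · rw [Finset.mem_coe, Finset.mem_filter] at ha ⊢
        obtain ⟨haS, hax⟩ := ha
        rw [hS, Finset.mem_filter] at haS
        exact ⟨hax, by rw [map_mul, haS.2]⟩
      · intro a _ b _ hab
        exact mul_right_cancel hab
    have h2 : S.filter (fun a => ¬ a * x ∈ A) ⊆ (folBoundary X A).filter (fun a => φ a = h) := by
      intro a ha
      rw [Finset.mem_filter] at ha
      obtain ⟨haS, hax⟩ := ha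
      rw [hS, Finset.mem_filter] at haS
      rw [Finset.mem_filter, folBoundary, Finset.mem_filter]
      exact ⟨⟨haS.1, x, hx, hax⟩, haS.2⟩
    have h2' := Finset.card_le_card h2
    have hmeq : m h = f (h * φ x) := hy₀
    have hfS : f h = S.card := rfl
    omega
  -- existence of a good level set
  have hN1 : 1 ≤ N := by
    obtain ⟨h₁, hh₁⟩ := hI
    exact le_trans (hfI hh₁) (hfN hh₁)
  have hBne : ∀ n ∈ Finset.Icc 1 N, (B n).Nonempty := by
    intro n hn
    rw [Finset.mem_Icc] at hn
    obtain ⟨h₀, hh₀, hsup⟩ := Finset.exists_mem_eq_sup' hI f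
    exact ⟨h₀, Finset.mem_filter.2 ⟨hh₀, by omega⟩⟩
  by_contra hcon
  push_neg at hcon
  have hlt : ∀ n ∈ Finset.Icc 1 N,
      (folBoundary X A).card * (B n).card
        < (folBoundary (X.image φ) (B n)).card * A.card := by
    intro n hn
    exact hcon (B n) (hBne n hn)
  have hne : (Finset.Icc 1 N).Nonempty := ⟨1, Finset.mem_Icc.2 ⟨le_refl 1, hN1⟩⟩
  have := Finset.sum_lt_sum_of_nonempty hne hlt
  rw [← Finset.mul_sum, ← Finset.sum_mul, hsum1] at this
  have hfin : (∑ n ∈ Finset.Icc 1 N, (folBoundary (X.image φ) (B n)).card) * A.card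
      ≤ (folBoundary X A).card * A.card := Nat.mul_le_mul_right _ hsum2
  exact lt_irrefl _ (lt_of_lt_of_le this hfin)

/-- Følner constants are monotone under surjective homomorphisms:
`Føl(H, φ(X)) ≤ Føl(G, X)`. -/
theorem folConst_mono_of_surjective {G H : Type*} [Group G] [Group H]
    (φ : G →* H) (hφ : Function.Surjective φ) (X : Finset G)
    (hgen : Subgroup.closure (X : Set G) = ⊤) :
    folConst (X.image φ) ≤ folConst X := by
  classical
  have hbdd : BddBelow (Set.range fun B : {B : Finset H // B.Nonempty} =>
      ((folBoundary (X.image φ) B.1).card : ℝ) / (B.1.card : ℝ)) := by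
    refine ⟨0, ?_⟩
    rintro _ ⟨B, rfl⟩
    positivity
  have hne : Nonempty {A : Finset G // A.Nonempty} := ⟨⟨{1}, Finset.singleton_nonempty 1⟩⟩
  refine le_ciInf (fun A => ?_)
  by_cases hX : X.Nonempty
  · obtain ⟨B, hB, hineq⟩ := folKey φ X A.1 A.2 hX
    have hle : folConst (X.image φ) ≤ ((folBoundary (X.image φ) B).card : ℝ) / (B.card : ℝ) :=
      ciInf_le hbdd ⟨B, hB⟩
    refine le_trans hle ?_
    rw [div_le_div_iff₀ (by exact_mod_cast Finset.card_pos.2 hB)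
      (by exact_mod_cast Finset.card_pos.2 A.2)]
    exact_mod_cast hineq
  · rw [Finset.not_nonempty_iff_eq_empty] at hX
    subst hX
    have hzero : folConst ((∅ : Finset G).image φ)
        ≤ ((folBoundary ((∅ : Finset G).image φ) {1}).card : ℝ) / (({1} : Finset H).card : ℝ) :=
      ciInf_le hbdd ⟨{1}, Finset.singleton_nonempty 1⟩
    have hb : folBoundary ((∅ : Finset G).image φ) ({1} : Finset H) = ∅ := by
      simp [folBoundary]
    rw [hb] at hzero
    simp only [Finset.card_empty, Nat.cast_zero, zero_div] at hzero
    refine le_trans hzero ?_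
    positivity
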